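/- If M is a persistence module over {1,…,n} with all M_i finite-dimensional, then M is isomorphic to a finite direct sum of interval modules ⨁_{j=1}^g I_{[a_j, b_j)}, and the multiset of intervals {[a_j, b_j)} is uniquely determined by M up to isomorphism. -/

import Mathlib

/-- A one-parameter persistence module over the linear order `{1, …, n}`
(encoded by `Fin n`): vector spaces `V i` with structure maps `V i → V j` for
`i ≤ j`, functorially. -/
structure PersMod (k : Type) [Field k] (n : ℕ) where
  V : Fin n → Type
  [acg : ∀ i, AddCommGroup (V i)]
  [mod : ∀ i, Module k (V i)]
  map : ∀ {i j : Fin n}, i ≤ j → (V i →ₗ[k] V j)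
  map_id : ∀ i : Fin n, map (le_refl i) = LinearMap.id
  map_comp : ∀ {i j l : Fin n} (hij : i ≤ j) (hjl : j ≤ l),
    (map hjl).comp (map hij) = map (hij.trans hjl)

attribute [instance] PersMod.acg PersMod.mod

variable {k : Type} [Field k] {n : ℕ}

/-- A morphism of persistence modules: a natural transformation. -/
@[ext]
structure PersHom (M N : PersMod k n) where
  app : ∀ i, M.V i →ₗ[k] N.V i
  natural : ∀ {i j : Fin n} (h : i ≤ j),
    (N.map h).comp (app i) = (app j).comp (M.map h)

/-- The sum of two morphisms of persistence modules. -/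
def PersHom.addH {M N : PersMod k n} (φ ψ : PersHom M N) : PersHom M N where
  app i := φ.app i + ψ.app i
  natural := by
    intro i j h
    ext x
    have h1 := LinearMap.congr_fun (φ.natural h) x
    have h2 := LinearMap.congr_fun (ψ.natural h) x
    simp only [LinearMap.comp_apply, LinearMap.add_apply] at *
    rw [map_add, h1, h2]

/-- The scalar multiple of a morphism of persistence modules. -/
def PersHom.smulH {M N : PersMod k n} (c : k) (φ : PersHom M N) : PersHom M N where
  app i := c • φ.app i
  natural := by
    intro i j h
    ext x
    have h1 := LinearMap.congr_fun (φ.natural h) x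
    simp only [LinearMap.comp_apply, LinearMap.smul_apply] at *
    rw [map_smul, h1]

/-- The zero morphism of persistence modules. -/
def PersHom.zeroH (M N : PersMod k n) : PersHom M N where
  app _ := 0
  natural := by intro i j h; ext x; simp

/-- The identity morphism of a persistence module. -/
def PersHom.idH (M : PersMod k n) : PersHom M M where
  app _ := LinearMap.id
  natural := by intro i j h; ext x; simp

/-- Composition of morphisms of persistence modules. -/
def PersHom.compH {L M N : PersMod k n} (φ : PersHom M N) (ψ : PersHom L M) :
    PersHom L N where
  app i := (φ.app i).comp (ψ.app i)
  natural := by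
    intro i j h
    ext x
    have h1 := LinearMap.congr_fun (φ.natural h) (ψ.app i x)
    have h2 := LinearMap.congr_fun (ψ.natural h) x
    simp only [LinearMap.comp_apply] at *
    rw [h1, h2]

/-- The difference of two morphisms of persistence modules. -/
def PersHom.subH {M N : PersMod k n} (φ ψ : PersHom M N) : PersHom M N where
  app i := φ.app i - ψ.app i
  natural := by
    intro i j h
    ext x
    have h1 := LinearMap.congr_fun (φ.natural h) x
    have h2 := LinearMap.congr_fun (ψ.natural h) x
    simp only [LinearMap.comp_apply, LinearMap.sub_apply] at *
    rw [map_sub, h1, h2]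

/-- The space at index `i` of the interval module `I_{[a,b)}` (1-based
interval endpoints): the field `k` if `a ≤ i < b`, zero otherwise. -/
def intervalSpace (k : Type) [Field k] (n : ℕ) (a b : ℕ) (i : Fin n) :
    Submodule k k :=
  if a ≤ (i : ℕ) + 1 ∧ (i : ℕ) + 1 < b then ⊤ else ⊥

/-- The interval persistence module `I_{[a,b)}`: it is `k` on indices
`a ≤ i < b` with identity structure maps, and `0` elsewhere. -/
def intervalMod (k : Type) [Field k] (n : ℕ) (a b : ℕ) : PersMod k n where
  V i := ↥(intervalSpace k n a b i)
  map {i j} h :=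
    { toFun := fun x =>
        ⟨if a ≤ (j : ℕ) + 1 ∧ (j : ℕ) + 1 < b then (x : k) else 0, by
          by_cases hc : a ≤ (j : ℕ) + 1 ∧ (j : ℕ) + 1 < b <;>
            simp [intervalSpace, hc]⟩
      map_add' := by
        intro x y
        apply Subtype.ext
        simp only [Submodule.coe_add]
        split_ifs <;> simp
      map_smul' := by
        intro c x
        apply Subtype.ext
        simp only [Submodule.coe_smul, RingHom.id_apply]
        split_ifs <;> simp }
  map_id := by
    intro i
    ext x
    by_cases hc : a ≤ (i : ℕ) + 1 ∧ (i : ℕ) + 1 < b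
    · simp [hc]
    · have : (x : k) = 0 := by
        have hx := x.2
        simp [intervalSpace, hc] at hx
        exact congrArg Subtype.val hx
      simp [hc, this]
  map_comp := by
    intro i j l hij hjl
    ext x
    simp only [LinearMap.comp_apply, LinearMap.coe_mk, AddHom.coe_mk]
    by_cases hl : a ≤ (l : ℕ) + 1 ∧ (l : ℕ) + 1 < b
    · by_cases hj : a ≤ (j : ℕ) + 1 ∧ (j : ℕ) + 1 < b
      · simp [hl, hj]
      · have : (x : k) = 0 := by
          have hx := x.2
          have hij' : (i : ℕ) ≤ (j : ℕ) := hij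
          have hjl' : (j : ℕ) ≤ (l : ℕ) := hjl
          obtain ⟨hl1, hl2⟩ := hl
          have hi : ¬(a ≤ (i : ℕ) + 1 ∧ (i : ℕ) + 1 < b) := by
            rintro ⟨h1, h2⟩
            exact hj ⟨by omega, by omega⟩
          simp [intervalSpace, hi] at hx
          exact congrArg Subtype.val hx
        simp [hl, hj, this]
    · simp [hl]

/-- The direct sum (finite product) of a finite family of persistence
modules. -/
def dSum {g : ℕ} (F : Fin g → PersMod k n) : PersMod k n where
  V i := ∀ j, (F j).V i
  map {i j} h := LinearMap.pi fun l => ((F l).map h).comp (LinearMap.proj l)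
  map_id := by
    intro i
    apply LinearMap.ext
    intro x
    funext l
    have := LinearMap.congr_fun ((F l).map_id i) (x l)
    simpa [LinearMap.pi_apply] using this
  map_comp := by
    intro i j l hij hjl
    apply LinearMap.ext
    intro x
    funext m
    have := LinearMap.congr_fun ((F m).map_comp hij hjl) (x m)
    simpa [LinearMap.pi_apply] using this

/-- Isomorphism of persistence modules. -/
def PersMod.Iso (M N : PersMod k n) : Prop :=
  ∃ (φ : PersHom M N) (ψ : PersHom N M),
    φ.compH ψ = PersHom.idH N ∧ ψ.compH φ = PersHom.idH M

open Module

section Helpers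
variable {k : Type} [Field k] {n : ℕ}

lemma PersHom.ext' {M N : PersMod k n} {φ ψ : PersHom M N}
    (h : ∀ i, φ.app i = ψ.app i) : φ = ψ := by
  cases φ; cases ψ
  simp only [PersHom.mk.injEq]
  funext i; exact h i

lemma compH_assoc {L M N P : PersMod k n} (φ : PersHom N P) (ψ : PersHom M N)
    (χ : PersHom L M) : (φ.compH ψ).compH χ = φ.compH (ψ.compH χ) :=
  PersHom.ext' fun _ => rfl

lemma idH_compH {M N : PersMod k n} (φ : PersHom M N) :
    (PersHom.idH N).compH φ = φ := PersHom.ext' fun _ => rfl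

lemma compH_idH {M N : PersMod k n} (φ : PersHom M N) :
    φ.compH (PersHom.idH M) = φ := PersHom.ext' fun _ => rfl

lemma PersMod.Iso.symm {M N : PersMod k n} (h : M.Iso N) : N.Iso M := by
  obtain ⟨φ, ψ, h1, h2⟩ := h; exact ⟨ψ, φ, h2, h1⟩

lemma PersMod.Iso.trans {M N P : PersMod k n} (h : M.Iso N) (h' : N.Iso P) :
    M.Iso P := by
  obtain ⟨φ1, ψ1, h1, h2⟩ := h; obtain ⟨φ2, ψ2, h3, h4⟩ := h'
  refine ⟨φ2.compH φ1, ψ1.compH ψ2, ?_, ?_⟩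
  · rw [compH_assoc, ← compH_assoc φ1, h1, idH_compH, h3]
  · rw [compH_assoc, ← compH_assoc ψ2, h4, idH_compH, h2]

lemma PersHom.app_app {M N : PersMod k n} {φ : PersHom M N} {ψ : PersHom N M}
    (h : ψ.compH φ = PersHom.idH M) (i : Fin n) (x : M.V i) :
    ψ.app i (φ.app i x) = x := by
  have := congrArg PersHom.app h
  have h2 := congrFun this i
  exact congrArg (fun (f : M.V i →ₗ[k] M.V i) => f x) h2

instance (a b : ℕ) (i : Fin n) : FiniteDimensional k ((intervalMod k n a b).V i) :=
  inferInstanceAs (FiniteDimensional k ↥(intervalSpace k n a b i))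

instance {g : ℕ} (F : Fin g → PersMod k n) [∀ j i, FiniteDimensional k ((F j).V i)]
    (i : Fin n) : FiniteDimensional k ((dSum F).V i) :=
  inferInstanceAs (FiniteDimensional k (∀ j, (F j).V i))

lemma iso_rank_eq {M N : PersMod k n} [∀ i, FiniteDimensional k (M.V i)]
    (h : M.Iso N) {i i' : Fin n} (hii : i ≤ i') :
    finrank k (LinearMap.range (M.map hii)) = finrank k (LinearMap.range (N.map hii)) := by
  obtain ⟨φ, ψ, h1, h2⟩ := h
  have hφs : Function.Surjective (φ.app i) := fun y =>
    ⟨ψ.app i y, PersHom.app_app h1 i y⟩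
  have hφinj : Function.Injective (φ.app i') := by
    intro x y hxy
    have := congrArg (ψ.app i') hxy
    rwa [PersHom.app_app h2, PersHom.app_app h2] at this
  have e1 : LinearMap.range ((N.map hii).comp (φ.app i)) = LinearMap.range (N.map hii) :=
    LinearMap.range_comp_of_range_eq_top _ (LinearMap.range_eq_top.mpr hφs)
  have e2 : LinearMap.range ((φ.app i').comp (M.map hii)) =
      Submodule.map (φ.app i') (LinearMap.range (M.map hii)) :=
    LinearMap.range_comp _ _
  rw [← e1, φ.natural hii, e2]
  exact (LinearEquiv.finrank_eq
    (Submodule.equivMapOfInjective (φ.app i') hφinj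
      (LinearMap.range (M.map hii))))

/-- Count of intervals alive at positions `p` and `q`. -/
def cnt {g : ℕ} (a b : Fin g → ℕ) (p q : ℕ) : ℕ :=
  (Finset.univ.filter (fun j => a j ≤ p ∧ q < b j)).card

/-- equiv between a pi submodule and the pi of the submodules -/
def piSub {g : ℕ} {W : Fin g → Type} [∀ j, AddCommGroup (W j)] [∀ j, Module k (W j)]
    (p : ∀ j, Submodule k (W j)) :
    ↥(Submodule.pi Set.univ p) ≃ₗ[k] ∀ j, ↥(p j) where
  toFun x := fun j => ⟨x.1 j, x.2 j (Set.mem_univ j)⟩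
  invFun y := ⟨fun j => y j, fun j _ => (y j).2⟩
  map_add' := by intros; rfl
  map_smul' := by intros; rfl
  left_inv := by intro x; rfl
  right_inv := by intro y; rfl

lemma range_dSum_pi {g : ℕ} (F : Fin g → PersMod k n) {i i' : Fin n} (h : i ≤ i') :
    LinearMap.range ((dSum F).map h) =
      Submodule.pi Set.univ (fun l => LinearMap.range ((F l).map h)) := by
  ext y; constructor
  · rintro ⟨x, rfl⟩ l _
    exact ⟨x l, rfl⟩
  · intro hy
    choose x hx using fun l => hy l (Set.mem_univ l)
    exact ⟨x, funext hx⟩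

lemma rank_interval_comp (a b : ℕ) {i i' : Fin n} (h : i ≤ i') :
    finrank k (LinearMap.range ((intervalMod k n a b).map h)) =
      if a ≤ (i : ℕ) + 1 ∧ (i' : ℕ) + 1 < b then 1 else 0 := by
  have hle : (i : ℕ) ≤ (i' : ℕ) := h
  by_cases hc : a ≤ (i : ℕ) + 1 ∧ (i' : ℕ) + 1 < b
  · rw [if_pos hc]
    have hsrc : a ≤ (i : ℕ) + 1 ∧ (i : ℕ) + 1 < b := ⟨hc.1, by omega⟩
    have htgt : a ≤ (i' : ℕ) + 1 ∧ (i' : ℕ) + 1 < b := ⟨by omega, hc.2⟩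
    have hsurj : Function.Surjective ((intervalMod k n a b).map h) := by
      intro y
      refine ⟨⟨y.1, by simp [intervalMod, intervalSpace, hsrc]⟩, ?_⟩
      apply Subtype.ext
      simp [intervalMod, htgt]
      rfl
    rw [LinearMap.range_eq_top.mpr hsurj]
    have hT : intervalSpace k n a b i' = ⊤ := if_pos htgt
    have : finrank k ((intervalMod k n a b).V i') = 1 := by
      show finrank k ↥(intervalSpace k n a b i') = 1
      rw [hT]
      simp [finrank_top]
    rw [finrank_top, this]
  · rw [if_neg hc]
    by_cases ht : a ≤ (i' : ℕ) + 1 ∧ (i' : ℕ) + 1 < b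
    · have hsrc : ¬(a ≤ (i : ℕ) + 1 ∧ (i : ℕ) + 1 < b) := by
        intro hs; exact hc ⟨hs.1, ht.2⟩
      have hdom : finrank k ((intervalMod k n a b).V i) = 0 := by
        show finrank k ↥(intervalSpace k n a b i) = 0
        rw [intervalSpace, if_neg hsrc]
        simp
      have := LinearMap.finrank_range_le ((intervalMod k n a b).map h)
      omega
    · have htgt : finrank k ((intervalMod k n a b).V i') = 0 := by
        show finrank k ↥(intervalSpace k n a b i') = 0
        rw [intervalSpace, if_neg ht]
        simp
      have := Submodule.finrank_le (LinearMap.range ((intervalMod k n a b).map h))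
      omega

lemma rank_dSum {g : ℕ} (a b : Fin g → ℕ) {i i' : Fin n} (h : i ≤ i') :
    finrank k (LinearMap.range ((dSum fun j => intervalMod k n (a j) (b j)).map h)) =
      cnt a b ((i : ℕ) + 1) ((i' : ℕ) + 1) := by
  rw [range_dSum_pi]
  refine (LinearEquiv.finrank_eq (piSub (k := k)
    (fun l => LinearMap.range ((intervalMod k n (a l) (b l)).map h)))).trans ?_
  rw [Module.finrank_pi_fintype]
  rw [cnt, Finset.card_filter]
  exact Finset.sum_congr rfl fun j _ => rank_interval_comp (a j) (b j) h

end Helpers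
section Comb

lemma filter_split {α : Type*} [Fintype α] (P Q R : α → Prop)
    [DecidablePred P] [DecidablePred Q] [DecidablePred R]
    (h : ∀ x, P x ↔ Q x ∨ R x) (hd : ∀ x, Q x → R x → False) :
    (Finset.univ.filter P).card = (Finset.univ.filter Q).card + (Finset.univ.filter R).card := by
  classical
  have hu : Finset.univ.filter P = Finset.univ.filter Q ∪ Finset.univ.filter R := by
    ext x; simp [h x]
  rw [hu, Finset.card_union_of_disjoint]
  rw [Finset.disjoint_left]
  intro x hx hx'
  simp only [Finset.mem_filter] at hx hx'
  exact hd x hx.2 hx'.2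

lemma filter_zero {α : Type*} [Fintype α] (P : α → Prop) [DecidablePred P]
    (h : ∀ x, ¬ P x) : (Finset.univ.filter P).card = 0 := by
  rw [Finset.card_eq_zero]
  exact Finset.filter_false_of_mem (fun x _ => h x)

def eqcnt {g : ℕ} (a b : Fin g → ℕ) (A B : ℕ) : ℕ :=
  (Finset.univ.filter (fun j => a j = A ∧ b j = B)).card

def midcnt {g : ℕ} (a b : Fin g → ℕ) (A q : ℕ) : ℕ :=
  (Finset.univ.filter (fun j => a j = A ∧ q < b j)).card

lemma cnt_split {g : ℕ} (a b : Fin g → ℕ) (A q : ℕ) (hA : 1 ≤ A) :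
    cnt a b A q = cnt a b (A-1) q + midcnt a b A q :=
  filter_split _ _ _ (fun j => by omega) (fun j => by omega)

lemma mid_split {g : ℕ} (a b : Fin g → ℕ) (A q : ℕ) :
    midcnt a b A q = midcnt a b A (q+1) + eqcnt a b A (q+1) :=
  filter_split _ _ _ (fun j => by omega) (fun j => by omega)

lemma eqcnt_eq {g g' N : ℕ} (a b : Fin g → ℕ) (a' b' : Fin g' → ℕ)
    (hbd : ∀ j, 1 ≤ a j ∧ a j < b j ∧ b j ≤ N)
    (hbd' : ∀ j, 1 ≤ a' j ∧ a' j < b' j ∧ b' j ≤ N)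
    (hC : ∀ p q, 1 ≤ p → p ≤ q → q + 1 ≤ N → cnt a b p q = cnt a' b' p q)
    (A B : ℕ) : eqcnt a b A B = eqcnt a' b' A B := by
  have hC2 : ∀ p q, p ≤ q → cnt a b p q = cnt a' b' p q := by
    intro p q hpq
    rcases Nat.eq_zero_or_pos p with hp | hp
    · subst hp
      unfold cnt
      rw [filter_zero _ (fun j => by have := hbd j; omega),
        filter_zero _ (fun j => by have := hbd' j; omega)]
    · rcases le_or_gt N q with hq | hq
      · unfold cnt
        rw [filter_zero _ (fun j => by have := hbd j; omega),
          filter_zero _ (fun j => by have := hbd' j; omega)]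
      · exact hC p q hp hpq (by omega)
  have hmid : ∀ A q, A ≤ q → midcnt a b A q = midcnt a' b' A q := by
    intro A q hAq
    rcases Nat.eq_zero_or_pos A with hA | hA
    · subst hA
      unfold midcnt
      rw [filter_zero _ (fun j => by have := hbd j; omega),
        filter_zero _ (fun j => by have := hbd' j; omega)]
    · have h1 := cnt_split a b A q hA
      have h2 := cnt_split a' b' A q hA
      have e1 := hC2 A q hAq
      have e2 := hC2 (A-1) q (by omega)
      omega
  rcases le_or_gt B A with hBA | hAB
  · unfold eqcnt
    rw [filter_zero _ (fun j => by have := hbd j; omega),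
      filter_zero _ (fun j => by have := hbd' j; omega)]
  · have h1 := mid_split a b A (B-1)
    have h2 := mid_split a' b' A (B-1)
    rw [show B - 1 + 1 = B by omega] at h1 h2
    have e1 := hmid A (B-1) (by omega)
    have e2 := hmid A B (by omega)
    omega

lemma multiset_eq_of_eqcnt {g g' : ℕ} (a b : Fin g → ℕ) (a' b' : Fin g' → ℕ)
    (h : ∀ A B, eqcnt a b A B = eqcnt a' b' A B) :
    (Finset.univ.val.map fun j => (a j, b j)) =
      (Finset.univ.val.map fun j => (a' j, b' j)) := by
  refine Multiset.ext.mpr fun x => ?_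
  rw [Multiset.count_map, Multiset.count_map]
  have key : ∀ {h : ℕ} (c d : Fin h → ℕ),
      (Multiset.filter (fun j => x = (c j, d j)) Finset.univ.val).card = eqcnt c d x.1 x.2 := by
    intro h c d
    have : (Finset.univ.filter (fun j => x = (c j, d j))) =
        (Finset.univ.filter (fun j => c j = x.1 ∧ d j = x.2)) := by
      ext j
      simp [Prod.ext_iff, eq_comm]
    calc (Multiset.filter (fun j => x = (c j, d j)) Finset.univ.val).card
        = (Finset.univ.filter (fun j => x = (c j, d j))).card := rfl
      _ = (Finset.univ.filter (fun j => c j = x.1 ∧ d j = x.2)).card := by rw [this]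
      _ = eqcnt c d x.1 x.2 := rfl
  rw [key, key, h]

end Comb
section Exist
variable {k : Type} [Field k] {n : ℕ}

lemma intervalV_eq_zero {a b : ℕ} {i : Fin n} (h : ¬(a ≤ (i:ℕ)+1 ∧ (i:ℕ)+1 < b))
    (x : ↥(intervalSpace k n a b i)) : x = 0 := by
  have hx := x.2
  simp only [intervalSpace, if_neg h] at hx
  exact Subtype.ext hx

lemma interval_last_zero {a b : ℕ} (hb : b ≤ n+1)
    (x : ↥(intervalSpace k (n+1) a b (Fin.last n))) : x = 0 :=
  intervalV_eq_zero (by simp only [Fin.val_last]; omega) x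

/-- the decomposability property -/
def GoodDecomp {n : ℕ} (M : PersMod k n) : Prop :=
  ∃ (g : ℕ) (a b : Fin g → ℕ),
    (∀ j, 1 ≤ a j ∧ a j < b j ∧ b j ≤ n + 1) ∧
    PersMod.Iso M (dSum fun j => intervalMod k n (a j) (b j))

lemma goodDecomp_zero (M : PersMod k 0) : GoodDecomp M := by
  refine ⟨0, Fin.elim0, Fin.elim0, fun j => j.elim0,
    ⟨fun i => i.elim0, fun {i j} h => i.elim0⟩,
    ⟨fun i => i.elim0, fun {i j} h => i.elim0⟩, ?_, ?_⟩ <;>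
    · apply PersHom.ext'
      intro i
      exact i.elim0

/-- restriction of a persistence module to the first n indices -/
def resMod (M : PersMod k (n+1)) : PersMod k n where
  V i := M.V i.castSucc
  map {i j} h := M.map (Fin.castSucc_le_castSucc_iff.mpr h)
  map_id i := M.map_id i.castSucc
  map_comp hij hjl := M.map_comp _ _

lemma goodDecomp_of_last_zero (M : PersMod k (n+1))
    (hd : Subsingleton (M.V (Fin.last n))) (hres : GoodDecomp (resMod M)) :
    GoodDecomp M := by
  obtain ⟨g, a, b, hbd, φ, ψ, h1, h2⟩ := hres
  refine ⟨g, a, b, fun j => ⟨(hbd j).1, (hbd j).2.1, by have := (hbd j).2.2; omega⟩, ?_⟩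
  have hDlast : ∀ (x : (dSum fun j => intervalMod k (n+1) (a j) (b j)).V (Fin.last n)),
      x = 0 := by
    intro x
    funext l
    exact interval_last_zero (hbd l).2.2 (x l)
  have hlastle : ∀ j' : Fin n, ¬ (Fin.last n ≤ j'.castSucc) := by
    intro j' hle
    rw [Fin.le_def] at hle
    simp only [Fin.val_last, Fin.coe_castSucc] at hle
    omega
  refine ⟨⟨fun i => Fin.lastCases 0 (fun i' => φ.app i') i, ?_⟩,
    ⟨fun i => Fin.lastCases 0 (fun i' => ψ.app i') i, ?_⟩, ?_, ?_⟩
  · intro i j h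
    revert h
    refine Fin.lastCases ?_ ?_ j
    · intro h
      ext x
      exact (hDlast _).trans (hDlast _).symm
    · intro j' h
      revert h
      refine Fin.lastCases ?_ ?_ i
      · intro h
        exact absurd h (hlastle j')
      · intro i' h
        erw [Fin.lastCases_castSucc, Fin.lastCases_castSucc]
        exact φ.natural (Fin.castSucc_le_castSucc_iff.mp h)
  · intro i j h
    revert h
    refine Fin.lastCases ?_ ?_ j
    · intro h
      ext x
      exact Subsingleton.elim _ _
    · intro j' h
      revert h
      refine Fin.lastCases ?_ ?_ i
      · intro h
        exact absurd h (hlastle j')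
      · intro i' h
        erw [Fin.lastCases_castSucc, Fin.lastCases_castSucc]
        exact ψ.natural (Fin.castSucc_le_castSucc_iff.mp h)
  · apply PersHom.ext'
    intro i
    refine Fin.lastCases ?_ ?_ i
    · ext z
      exact (hDlast _).trans (hDlast _).symm
    · intro i'
      ext z
      dsimp only [PersHom.compH, PersHom.idH]
      simp only [LinearMap.comp_apply, LinearMap.id_apply]
      erw [Fin.lastCases_castSucc, Fin.lastCases_castSucc]
      exact PersHom.app_app h1 i' z
  · apply PersHom.ext'
    intro i
    refine Fin.lastCases ?_ ?_ i
    · ext z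
      exact Subsingleton.elim _ _
    · intro i'
      ext z
      dsimp only [PersHom.compH, PersHom.idH]
      simp only [LinearMap.comp_apply, LinearMap.id_apply]
      erw [Fin.lastCases_castSucc, Fin.lastCases_castSucc]
      exact PersHom.app_app h2 i' z

end Exist
section Split
variable {k : Type} [Field k] {n : ℕ}

lemma dSum_map_apply {g : ℕ} (F : Fin g → PersMod k n) {i i' : Fin n} (h : i ≤ i')
    (x : (dSum F).V i) (j : Fin g) : ((dSum F).map h x) j = (F j).map h (x j) := rfl

lemma interval_map_val {a b : ℕ} {i j : Fin n} (h : i ≤ j)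
    (x : ↥(intervalSpace k n a b i)) :
    (((intervalMod k n a b).map h x) : ↥(intervalSpace k n a b j)).val =
      if a ≤ (j:ℕ)+1 ∧ (j:ℕ)+1 < b then x.val else 0 := rfl

set_option maxHeartbeats 2000000 in
lemma goodDecomp_split (M : PersMod k (n+1)) [inst : ∀ i, FiniteDimensional k (M.V i)]
    (d : ℕ) (hd : finrank k (M.V (Fin.last n)) = d + 1)
    (IH : ∀ (M' : PersMod k (n+1)), (∀ i, FiniteDimensional k (M'.V i)) →
      finrank k (M'.V (Fin.last n)) = d → GoodDecomp M') :
    GoodDecomp M := by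
  classical
  -- minimal index whose image in the last space is nonzero
  have hnt : Nontrivial (M.V (Fin.last n)) := Module.finrank_pos_iff.mp (by rw [hd]; omega)
  set P : Fin (n+1) → Prop := fun p => LinearMap.range (M.map (Fin.le_last p)) ≠ ⊥ with hP
  have hPlast : P (Fin.last n) := by
    intro hbot2
    rw [show M.map (Fin.le_last (Fin.last n)) = LinearMap.id from M.map_id _,
      LinearMap.range_id] at hbot2
    obtain ⟨x, hx⟩ := exists_ne (0 : M.V (Fin.last n))
    have hxmem : x ∈ (⊥ : Submodule k (M.V (Fin.last n))) := hbot2 ▸ Submodule.mem_top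
    exact hx ((Submodule.mem_bot _).mp hxmem)
  set S : Finset (Fin (n+1)) := Finset.univ.filter P with hS
  have hne : S.Nonempty := ⟨(Fin.last n), Finset.mem_filter.mpr ⟨Finset.mem_univ _, hPlast⟩⟩
  set p₀ := S.min' hne with hp₀def
  have hp₀P : P p₀ := (Finset.mem_filter.mp (S.min'_mem hne)).2
  have hbot : ∀ p : Fin (n+1), ¬ p₀ ≤ p → M.map (Fin.le_last p) = 0 := by
    intro p hp
    by_contra hne0
    have hPp : P p := by
      intro hb
      exact hne0 (LinearMap.range_eq_bot.mp hb)
    exact hp (S.min'_le p (Finset.mem_filter.mpr ⟨Finset.mem_univ _, hPp⟩))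
  have mcomp : ∀ {p q r : Fin (n+1)} (hpq : p ≤ q) (hqr : q ≤ r) (x : M.V p),
      M.map hqr (M.map hpq x) = M.map (hpq.trans hqr) x := by
    intro p q r hpq hqr x
    simpa using LinearMap.congr_fun (M.map_comp hpq hqr) x
  -- choose the generating vector
  obtain ⟨u, humem, hu⟩ := (Submodule.ne_bot_iff _).mp hp₀P
  obtain ⟨v, hv⟩ := humem
  obtain ⟨C, hC⟩ := Submodule.exists_isCompl (Submodule.span k {u})
  -- the coefficient functional
  set pr : M.V (Fin.last n) →ₗ[k] k :=
    (LinearEquiv.coord k (M.V (Fin.last n)) u hu).toLinearMap ∘ₗ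
      Submodule.linearProjOfIsCompl _ C hC with hpr
  have pr_u : pr u = 1 := by
    have h1 : Submodule.linearProjOfIsCompl _ C hC u =
        ⟨u, Submodule.mem_span_singleton_self u⟩ :=
      Submodule.linearProjOfIsCompl_apply_left hC ⟨u, Submodule.mem_span_singleton_self u⟩
    simp only [hpr, LinearMap.comp_apply, LinearEquiv.coe_coe, h1]
    exact LinearEquiv.coord_self k _ u hu
  have pr_C : ∀ y ∈ C, pr y = 0 := by
    intro y hy
    simp only [hpr, LinearMap.comp_apply, LinearEquiv.coe_coe,
      Submodule.projectionOnto_apply_of_mem_right hC hy]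
    exact (congrArg (LinearEquiv.coord k (M.V (Fin.last n)) u hu)
      (Submodule.projectionOnto_apply_of_mem_right hC hy)).trans (map_zero _)
  have sub_mem : ∀ y : M.V (Fin.last n), y - pr y • u ∈ C := by
    intro y
    have hsum := Submodule.projection_add_projection_eq_self hC y
    have hcoord : pr y • u = ((Submodule.linearProjOfIsCompl _ C hC y : M.V (Fin.last n))) := by
      simpa only [hpr, LinearMap.comp_apply, LinearEquiv.coe_coe] using
        LinearEquiv.coord_apply_smul k (M.V (Fin.last n)) u hu (Submodule.linearProjOfIsCompl _ C hC y)
    rw [hcoord]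
    have h6 : ((C.linearProjOfIsCompl _ hC.symm y : M.V (Fin.last n))) =
        y - ((Submodule.span k {u}).linearProjOfIsCompl C hC y : M.V (Fin.last n)) :=
      eq_sub_of_add_eq' hsum
    rw [← h6]
    exact ((C.linearProjOfIsCompl _ hC.symm) y).2
  -- the tower of vectors
  set vv : ∀ p : Fin (n+1), M.V p := fun p => if h : p₀ ≤ p then M.map h v else 0 with hvv
  have vmap : ∀ {p q : Fin (n+1)} (h : p ≤ q), p₀ ≤ p → M.map h (vv p) = vv q := by
    intro p q h hp
    rw [hvv]
    simp only [dif_pos hp, dif_pos (hp.trans h)]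
    exact LinearMap.congr_fun (M.map_comp hp h) v
  have vlast : ∀ p : Fin (n+1), p₀ ≤ p → M.map (Fin.le_last p) (vv p) = u := by
    intro p hp
    rw [show M.map (Fin.le_last p) (vv p) = vv (Fin.last n) from vmap _ hp]
    rw [hvv]
    simp only [dif_pos (Fin.le_last p₀)]
    exact hv
  -- the coefficient functionals
  set π : ∀ p : Fin (n+1), M.V p →ₗ[k] k :=
    fun p => pr ∘ₗ M.map (Fin.le_last p) with hπ
  have π_nat : ∀ {p q : Fin (n+1)} (h : p ≤ q) (x : M.V p),
      π q (M.map h x) = π p x := by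
    intro p q h x
    simp only [hπ, LinearMap.comp_apply]
    rw [mcomp h (Fin.le_last q) x]
  have π_zero : ∀ p : Fin (n+1), ¬ p₀ ≤ p → ∀ x, π p x = 0 := by
    intro p hp x
    simp only [hπ, LinearMap.comp_apply, hbot p hp, LinearMap.zero_apply, map_zero]
  have π_vv : ∀ p : Fin (n+1), p₀ ≤ p → π p (vv p) = 1 := by
    intro p hp
    simp only [hπ, LinearMap.comp_apply, vlast p hp, pr_u]
  -- the complement submodules
  set Cp : ∀ p : Fin (n+1), Submodule k (M.V p) :=
    fun p => Submodule.comap (M.map (Fin.le_last p)) C with hCp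
  have mem_Cp : ∀ {p : Fin (n+1)} (x : M.V p), x ∈ Cp p ↔ M.map (Fin.le_last p) x ∈ C := by
    intro p x; rfl
  have π_vanish : ∀ (p : Fin (n+1)) (x : M.V p), x ∈ Cp p → π p x = 0 := by
    intro p x hx
    exact pr_C _ ((mem_Cp x).mp hx)
  have ρ_mem : ∀ (p : Fin (n+1)) (x : M.V p), x - π p x • vv p ∈ Cp p := by
    intro p x
    rw [mem_Cp, map_sub, map_smul]
    by_cases hp : p₀ ≤ p
    · rw [vlast p hp]
      simp only [hπ, LinearMap.comp_apply]
      exact sub_mem _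
    · rw [hbot p hp]
      simp only [LinearMap.zero_apply, smul_zero, sub_zero]
      exact Submodule.zero_mem C
  set ρ : ∀ p : Fin (n+1), M.V p →ₗ[k] ↥(Cp p) := fun p =>
    LinearMap.codRestrict (Cp p)
      (LinearMap.id - (LinearMap.toSpanSingleton k _ (vv p)) ∘ₗ (π p))
      (fun x => by simpa using ρ_mem p x) with hρ
  have ρ_apply : ∀ (p : Fin (n+1)) (x : M.V p), ((ρ p x : M.V p)) = x - π p x • vv p := by
    intro p x; rfl
  have ρ_C : ∀ (p : Fin (n+1)) (y : ↥(Cp p)), ρ p (y : M.V p) = y := by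
    intro p y
    apply Subtype.ext
    rw [ρ_apply, π_vanish p _ y.2, zero_smul, sub_zero]
  have ρ_vv : ∀ p : Fin (n+1), ρ p (vv p) = 0 := by
    intro p
    apply Subtype.ext
    rw [ρ_apply]
    by_cases hp : p₀ ≤ p
    · rw [π_vv p hp, one_smul, sub_self]; rfl
    · rw [π_zero p hp, zero_smul, sub_zero]
      simp only [hvv, dif_neg hp]; rfl
  -- the complementary persistence module
  set M' : PersMod k (n+1) :=
    { V := fun p => ↥(Cp p)
      map := fun {p q} h => (M.map h).restrict (p := Cp p) (q := Cp q) (by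
        intro x hx
        rw [mem_Cp] at hx ⊢
        rwa [mcomp h (Fin.le_last q) x])
      map_id := by
        intro p
        apply LinearMap.ext
        intro x
        apply Subtype.ext
        simp only [LinearMap.restrict_apply]
        exact congrArg (fun f => f x.1) (congrArg DFunLike.coe (M.map_id p))
      map_comp := by
        intro p q r hpq hqr
        apply LinearMap.ext
        intro x
        apply Subtype.ext
        simp only [LinearMap.comp_apply, LinearMap.restrict_apply]
        exact LinearMap.congr_fun (M.map_comp hpq hqr) x.1 } with hM'
  have hM'fd : ∀ p, FiniteDimensional k (M'.V p) :=
    fun p => inferInstanceAs (FiniteDimensional k ↥(Cp p))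
  have hM'last : finrank k (M'.V (Fin.last n)) = d := by
    have hCl : Cp (Fin.last n) = C := by
      show Submodule.comap (M.map (Fin.le_last (Fin.last n))) C = C
      rw [show M.map (Fin.le_last (Fin.last n)) = LinearMap.id from M.map_id _]
      exact Submodule.comap_id C
    show finrank k ↥(Cp (Fin.last n)) = d
    rw [hCl]
    have h1 := Submodule.finrank_add_eq_of_isCompl hC
    have h2 : finrank k ↥(Submodule.span k {u}) = 1 := finrank_span_singleton hu
    omega
  obtain ⟨g, a, b, hbd, γφ, γψ, hγ1, hγ2⟩ := IH M' hM'fd hM'last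
  -- new interval data
  set A : ℕ := (p₀ : ℕ) + 1 with hA
  have hcond : ∀ p : Fin (n+1), (A ≤ (p:ℕ)+1 ∧ (p:ℕ)+1 < n+1+1) ↔ p₀ ≤ p := by
    intro p
    have := p.isLt
    have := p₀.isLt
    rw [Fin.le_def]
    omega
  refine ⟨g+1, Fin.cons A a, Fin.cons (n+2) b, ?_, ?_⟩
  · intro j
    refine Fin.cases ?_ ?_ j
    · simp only [Fin.cons_zero]
      have := p₀.isLt
      omega
    · intro j'
      simpa only [Fin.cons_succ] using hbd j'
  -- the isomorphism
  have ρ_nat : ∀ {p q : Fin (n+1)} (h : p ≤ q) (x : M.V p),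
      ρ q (M.map h x) = M'.map h (ρ p x) := by
    intro p q h x
    apply Subtype.ext
    show M.map h x - π q (M.map h x) • vv q = M.map h ((ρ p x : M.V p))
    rw [ρ_apply, map_sub, map_smul, π_nat h x]
    by_cases hp : p₀ ≤ p
    · rw [vmap h hp]
    · rw [π_zero p hp x, zero_smul, zero_smul]
  have f0mem : ∀ (p : Fin (n+1)) (c : k),
      (if A ≤ (p:ℕ)+1 ∧ (p:ℕ)+1 < n+2 then c else 0) ∈ intervalSpace k (n+1) A (n+2) p := by
    intro p c
    rw [intervalSpace]
    split_ifs with hc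
    · exact Submodule.mem_top
    · exact Submodule.zero_mem _
  set f0 : ∀ p : Fin (n+1), M.V p →ₗ[k] ↥(intervalSpace k (n+1) A (n+2) p) := fun p =>
    { toFun := fun x => ⟨if A ≤ (p:ℕ)+1 ∧ (p:ℕ)+1 < n+2 then π p x else 0, f0mem p _⟩
      map_add' := by
        intro x y
        apply Subtype.ext
        simp only [map_add]
        split_ifs <;> simp
      map_smul' := by
        intro c x
        apply Subtype.ext
        simp only [map_smul, RingHom.id_apply]
        split_ifs <;> simp } with hf0
  set DD := dSum fun j : Fin (g+1) =>
    intervalMod k (n+1) (Fin.cons (α := fun _ => ℕ) A a j)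
      (Fin.cons (α := fun _ => ℕ) (n+2) b j) with hDD
  set tl : ∀ p : Fin (n+1),
      DD.V p →ₗ[k] (dSum fun j : Fin g => intervalMod k (n+1) (a j) (b j)).V p := fun p =>
    LinearMap.pi (fun j' : Fin g => LinearMap.proj (j'.succ)) with htl
  have tl_apply : ∀ (p : Fin (n+1)) (z : DD.V p) (j' : Fin g),
      tl p z j' = z j'.succ := fun p z j' => rfl
  set Φapp : ∀ p : Fin (n+1), M.V p →ₗ[k] DD.V p := fun p =>
    LinearMap.pi (fun j => Fin.cases (f0 p)
      (fun j' => (LinearMap.proj j').comp ((γφ.app p).comp (ρ p))) j) with hΦapp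
  set Ψapp : ∀ p : Fin (n+1), DD.V p →ₗ[k] M.V p := fun p =>
    ((LinearMap.toSpanSingleton k (M.V p) (vv p)).comp
      ((intervalSpace k (n+1) A (n+2) p).subtype.comp (LinearMap.proj 0))) +
    ((Cp p).subtype.comp ((γψ.app p).comp (tl p))) with hΨapp
  have Φapp_zero : ∀ (p : Fin (n+1)) (x : M.V p),
      (Φapp p x 0).val = if A ≤ (p:ℕ)+1 ∧ (p:ℕ)+1 < n+2 then π p x else 0 := by
    intro p x
    show ((Fin.cases (motive := fun j => M.V p →ₗ[k] (intervalMod k (n+1) (Fin.cons (α := fun _ => ℕ) A a j)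
      (Fin.cons (α := fun _ => ℕ) (n+2) b j)).V p) (f0 p)
      (fun j' => (LinearMap.proj j').comp ((γφ.app p).comp (ρ p))) 0) x).val = _
    rfl
  have Φapp_succ : ∀ (p : Fin (n+1)) (x : M.V p) (j' : Fin g),
      Φapp p x j'.succ = γφ.app p (ρ p x) j' := by
    intro p x j'
    show ((Fin.cases (motive := fun j => M.V p →ₗ[k] (intervalMod k (n+1) (Fin.cons (α := fun _ => ℕ) A a j)
      (Fin.cons (α := fun _ => ℕ) (n+2) b j)).V p) (f0 p)
      (fun j' => (LinearMap.proj j').comp ((γφ.app p).comp (ρ p))) j'.succ) x) = _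
    rfl
  have Ψapp_val : ∀ (p : Fin (n+1)) (z : DD.V p),
      Ψapp p z = (z 0).val • vv p + ((γψ.app p (tl p z)) : M.V p) := fun p z => rfl
  have Φnat : ∀ {p q : Fin (n+1)} (h : p ≤ q),
      (DD.map h).comp (Φapp p) = (Φapp q).comp (M.map h) := by
    intro p q h
    apply LinearMap.ext
    intro x
    simp only [LinearMap.comp_apply]
    funext j
    refine Fin.cases ?_ ?_ j
    · apply Subtype.ext
      rw [dSum_map_apply]
      erw [interval_map_val]
      rw [Φapp_zero, Φapp_zero, π_nat h x]
      by_cases hp : A ≤ (p:ℕ)+1 ∧ (p:ℕ)+1 < n+2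
      · simp only [Fin.cons_zero, if_pos hp]
      · have hz : π p x = 0 := π_zero p (fun hge => hp ((hcond p).mpr hge)) x
        simp only [Fin.cons_zero, if_neg hp, hz, ite_self]
    · intro j'
      rw [dSum_map_apply, Φapp_succ, Φapp_succ, ρ_nat h x]
      have hnat := LinearMap.congr_fun (γφ.natural h) (ρ p x)
      simp only [LinearMap.comp_apply] at hnat
      rw [← hnat]
      rfl
  have Ψnat : ∀ {p q : Fin (n+1)} (h : p ≤ q),
      (M.map h).comp (Ψapp p) = (Ψapp q).comp (DD.map h) := by
    intro p q h
    apply LinearMap.ext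
    intro z
    simp only [LinearMap.comp_apply]
    rw [Ψapp_val, Ψapp_val, map_add, map_smul]
    have htlq : tl q (DD.map h z) =
        (dSum fun j : Fin g => intervalMod k (n+1) (a j) (b j)).map h (tl p z) := by
      funext j'
      rw [tl_apply, dSum_map_apply, dSum_map_apply, tl_apply]
      rfl
    rw [htlq]
    have hnat := LinearMap.congr_fun (γψ.natural h) (tl p z)
    simp only [LinearMap.comp_apply] at hnat
    rw [← hnat]
    have hsnd : ((M'.map h (γψ.app p (tl p z))) : M.V q) =
        M.map h ((γψ.app p (tl p z)) : M.V p) := rfl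
    rw [hsnd]
    congr 1
    have hz0 : ((DD.map h z) 0).val =
        if A ≤ (q:ℕ)+1 ∧ (q:ℕ)+1 < n+2 then (z 0).val else 0 := by
      rw [dSum_map_apply]
      erw [interval_map_val]
      simp only [Fin.cons_zero]
    rw [hz0]
    by_cases hp : p₀ ≤ p
    · rw [vmap h hp, if_pos ((hcond q).mpr (hp.trans h))]
    · have hz : (z 0) = 0 := intervalV_eq_zero (fun hc => hp ((hcond p).mp hc)) (z 0)
      rw [show (z 0).val = 0 by rw [hz]; rfl]
      simp
  refine ⟨⟨Φapp, Φnat⟩, ⟨Ψapp, Ψnat⟩, ?_, ?_⟩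
  · apply PersHom.ext'
    intro p
    apply LinearMap.ext
    intro z
    dsimp only [PersHom.compH, PersHom.idH]
    simp only [LinearMap.comp_apply, LinearMap.id_apply]
    funext j
    refine Fin.cases ?_ ?_ j
    · apply Subtype.ext
      rw [Φapp_zero, Ψapp_val, map_add, map_smul]
      rw [π_vanish p _ (γψ.app p (tl p z)).2]
      by_cases hp : A ≤ (p:ℕ)+1 ∧ (p:ℕ)+1 < n+2
      · rw [if_pos hp, π_vv p ((hcond p).mp hp)]
        simp
      · rw [if_neg hp]
        have hz : (z 0) = 0 := intervalV_eq_zero (fun hc => hp hc) (z 0)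
        rw [show (z 0).val = 0 by rw [hz]; rfl]
    · intro j'
      rw [Φapp_succ]
      have hρΨ : ρ p (Ψapp p z) = γψ.app p (tl p z) := by
        rw [Ψapp_val, map_add, map_smul, ρ_vv, smul_zero, zero_add, ρ_C]
      rw [hρΨ, PersHom.app_app hγ1 p (tl p z)]
      rfl
  · apply PersHom.ext'
    intro p
    apply LinearMap.ext
    intro x
    dsimp only [PersHom.compH, PersHom.idH]
    simp only [LinearMap.comp_apply, LinearMap.id_apply]
    rw [Ψapp_val]
    have htlΦ : tl p (Φapp p x) = γφ.app p (ρ p x) := by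
      funext j'
      rw [tl_apply, Φapp_succ]
    rw [htlΦ, PersHom.app_app hγ2 p (ρ p x), Φapp_zero, ρ_apply]
    by_cases hp : A ≤ (p:ℕ)+1 ∧ (p:ℕ)+1 < n+2
    · rw [if_pos hp]
      abel
    · rw [if_neg hp, zero_smul, zero_add,
        π_zero p (fun hge => hp ((hcond p).mpr hge)) x, zero_smul, sub_zero]

end Split
section Final
variable {k : Type} [Field k] {n : ℕ}

lemma goodDecomp_all : ∀ (n : ℕ) (M : PersMod k n),
    (∀ i, FiniteDimensional k (M.V i)) → GoodDecomp M := by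
  intro n
  induction n with
  | zero => intro M _; exact goodDecomp_zero M
  | succ n ih =>
    have inner : ∀ (d : ℕ) (M : PersMod k (n+1)),
        (∀ i, FiniteDimensional k (M.V i)) →
        Module.finrank k (M.V (Fin.last n)) = d → GoodDecomp M := by
      intro d
      induction d with
      | zero =>
        intro M hfd h0
        have hsub : Subsingleton (M.V (Fin.last n)) := by
          haveI := hfd (Fin.last n)
          exact Module.finrank_zero_iff.mp h0
        exact goodDecomp_of_last_zero M hsub
          (ih (resMod M) (fun i => hfd i.castSucc))
      | succ d ihd =>
        intro M hfd hsucc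
        exact @goodDecomp_split k _ n M hfd d hsucc (fun M' h1 h2 => ihd M' h1 h2)
    intro M hfd
    exact inner _ M hfd rfl

end Final

theorem persistence_structure_theorem (k : Type) [Field k] (n : ℕ)
    (M : PersMod k n) [∀ i, FiniteDimensional k (M.V i)] :
    ∃ (g : ℕ) (a b : Fin g → ℕ),
      (∀ j, 1 ≤ a j ∧ a j < b j ∧ b j ≤ n + 1) ∧
      PersMod.Iso M (dSum fun j => intervalMod k n (a j) (b j)) ∧
      ∀ (g' : ℕ) (a' b' : Fin g' → ℕ),
        (∀ j, 1 ≤ a' j ∧ a' j < b' j ∧ b' j ≤ n + 1) →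
        PersMod.Iso M (dSum fun j => intervalMod k n (a' j) (b' j)) →
        (Finset.univ.val.map fun j => (a j, b j)) =
          (Finset.univ.val.map fun j => (a' j, b' j)) := by
  obtain ⟨g, a, b, hbd, hiso⟩ := goodDecomp_all n M inferInstance
  refine ⟨g, a, b, hbd, hiso, ?_⟩
  intro g' a' b' hbd' hiso'
  have hC : ∀ p q, 1 ≤ p → p ≤ q → q + 1 ≤ n + 1 →
      cnt a b p q = cnt a' b' p q := by
    intro p q hp hpq hq
    have hiso2 : (dSum fun j => intervalMod k n (a j) (b j)).Iso
        (dSum fun j => intervalMod k n (a' j) (b' j)) := (hiso.symm).trans hiso'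
    have hpn : p - 1 < n := by omega
    have hqn : q - 1 < n := by omega
    have hii : (⟨p-1, hpn⟩ : Fin n) ≤ (⟨q-1, hqn⟩ : Fin n) := by
      exact Fin.mk_le_mk.mpr (by omega)
    have h1 := rank_dSum (k := k) a b hii
    have h2 := rank_dSum (k := k) a' b' hii
    have h3 := iso_rank_eq hiso2 hii
    have e1 : ((⟨p-1, hpn⟩ : Fin n) : ℕ) + 1 = p := by simp; omega
    have e2 : ((⟨q-1, hqn⟩ : Fin n) : ℕ) + 1 = q := by simp; omega
    rw [e1, e2] at h1 h2
    rw [← h1, ← h2, h3]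
  exact multiset_eq_of_eqcnt a b a' b'
    (eqcnt_eq a b a' b' hbd hbd' hC)
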